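/- Let f : ℝ³ → ℝ be continuously differentiable and suppose Π × ∇f(Π) = 0 for every Π ∈ ℝ³. Then f is constant on every sphere centred at the origin: for all x, y ∈ ℝ³ with ‖x‖ = ‖y‖, f(x) = f(y). -/

import Mathlib

set_option maxHeartbeats 1000000


open Matrix

/-- The (Euclidean) gradient of a function on `ℝ³ = Fin 3 → ℝ`. -/
noncomputable def grad (f : (Fin 3 → ℝ) → ℝ) (x : Fin 3 → ℝ) : Fin 3 → ℝ :=
  fun i => fderiv ℝ f x (Pi.single i 1)

lemma fderiv_eq_sum (f : (Fin 3 → ℝ) → ℝ) (x v : Fin 3 → ℝ) :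
    fderiv ℝ f x v = ∑ i, v i * grad f x i := by
  have hv : v = ∑ i : Fin 3, v i • (Pi.single i (1:ℝ) : Fin 3 → ℝ) := by
    ext j
    simp [Finset.sum_apply, Pi.single_apply]
  conv_lhs => rw [hv]
  rw [map_sum]
  simp [grad, smul_eq_mul]

lemma const_along (f : (Fin 3 → ℝ) → ℝ) (hf : ContDiff ℝ 1 f)
    (c c' : ℝ → Fin 3 → ℝ)
    (hc : ∀ t, HasDerivAt c (c' t) t)
    (hdot : ∀ t, ∑ i, c' t i * grad f (c t) i = 0) (s t : ℝ) :
    f (c s) = f (c t) := by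
  have hg : ∀ u, HasDerivAt (fun u => f (c u)) 0 u := by
    intro u
    have h1 : DifferentiableAt ℝ f (c u) := (hf.differentiable one_ne_zero).differentiableAt
    have h2 := h1.hasFDerivAt.comp_hasDerivAt u (hc u)
    have h3 : fderiv ℝ f (c u) (c' u) = 0 := by
      rw [fderiv_eq_sum]; exact hdot u
    rwa [h3] at h2
  exact is_const_of_deriv_eq_zero (fun u => (hg u).differentiableAt)
    (fun u => (hg u).deriv) s t

lemma exists_cos_sin {a b : ℝ} (h : a^2 + b^2 = 1) :
    ∃ t, Real.cos t = a ∧ Real.sin t = b := by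
  have ha1 : -1 ≤ a := by nlinarith [sq_nonneg b]
  have ha2 : a ≤ 1 := by nlinarith [sq_nonneg b]
  rcases le_or_gt 0 b with hb | hb
  · refine ⟨Real.arccos a, Real.cos_arccos ha1 ha2, ?_⟩
    rw [Real.sin_arccos, show 1 - a^2 = b^2 by linarith]
    exact Real.sqrt_sq hb
  · refine ⟨-Real.arccos a, by rw [Real.cos_neg]; exact Real.cos_arccos ha1 ha2, ?_⟩
    rw [Real.sin_neg, Real.sin_arccos, show 1 - a^2 = b^2 by linarith,
      Real.sqrt_sq_eq_abs, abs_of_neg hb]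
    ring

lemma dot_e3 (f : (Fin 3 → ℝ) → ℝ)
    (hcas : ∀ P : Fin 3 → ℝ, P ⨯₃ grad f P = 0) (P : Fin 3 → ℝ) :
    P 0 * grad f P 1 - P 1 * grad f P 0 = 0 := by
  have := congrFun (hcas P) 2
  simpa [crossProduct] using this

lemma dot_e2 (f : (Fin 3 → ℝ) → ℝ)
    (hcas : ∀ P : Fin 3 → ℝ, P ⨯₃ grad f P = 0) (P : Fin 3 → ℝ) :
    P 2 * grad f P 0 - P 0 * grad f P 2 = 0 := by
  have := congrFun (hcas P) 1
  simpa [crossProduct] using this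

lemma to_axis (f : (Fin 3 → ℝ) → ℝ) (hf : ContDiff ℝ 1 f)
    (hcas : ∀ P : Fin 3 → ℝ, P ⨯₃ grad f P = 0) (x : Fin 3 → ℝ) :
    f x = f ![Real.sqrt (∑ i, x i ^ 2), 0, 0] := by
  set R := Real.sqrt (∑ i, x i ^ 2) with hRdef
  have hsum : (∑ i, x i ^ 2) = x 0 ^ 2 + x 1 ^ 2 + x 2 ^ 2 := by
    rw [Fin.sum_univ_three]
  have hR0 : 0 ≤ R := Real.sqrt_nonneg _
  have hR2 : R ^ 2 = x 0 ^ 2 + x 1 ^ 2 + x 2 ^ 2 := by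
    rw [hRdef, Real.sq_sqrt (by rw [hsum]; positivity)]
    exact hsum
  set r := Real.sqrt (x 0 ^ 2 + x 1 ^ 2) with hrdef
  have hr0 : 0 ≤ r := Real.sqrt_nonneg _
  have hr2 : r ^ 2 = x 0 ^ 2 + x 1 ^ 2 := Real.sq_sqrt (by positivity)
  -- Step 1: rotate about the z-axis to reach ![r, 0, x 2]
  have step1 : f x = f ![r, 0, x 2] := by
    obtain ⟨t1, hct, hst⟩ : ∃ t, x 0 * Real.cos t - x 1 * Real.sin t = r ∧
        x 0 * Real.sin t + x 1 * Real.cos t = 0 := by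
      rcases eq_or_lt_of_le hr0 with h0 | hpos
      · have hx0 : x 0 = 0 := by nlinarith [sq_nonneg (x 0), sq_nonneg (x 1)]
        have hx1 : x 1 = 0 := by nlinarith [sq_nonneg (x 0), sq_nonneg (x 1)]
        exact ⟨0, by simp [hx0, hx1, ← h0], by simp [hx0, hx1]⟩
      · obtain ⟨t, hc, hs⟩ := exists_cos_sin (a := x 0 / r) (b := -(x 1) / r)
          (by field_simp; nlinarith)
        refine ⟨t, ?_, ?_⟩ <;> rw [hc, hs] <;> field_simp <;> nlinarith
    set c : ℝ → Fin 3 → ℝ := fun t =>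
      ![x 0 * Real.cos t - x 1 * Real.sin t, x 0 * Real.sin t + x 1 * Real.cos t, x 2]
      with hcdef
    have key := const_along f hf c
      (fun t => ![-(x 0 * Real.sin t + x 1 * Real.cos t),
        x 0 * Real.cos t - x 1 * Real.sin t, 0])
      (fun t => by
        rw [hasDerivAt_pi]
        intro i
        fin_cases i
        · simpa [hcdef, Pi.sub_def, Pi.add_def, Pi.neg_def] using (((Real.hasDerivAt_cos t).const_mul (x 0)).sub
            ((Real.hasDerivAt_sin t).const_mul (x 1))).congr_deriv (by ring)
        · simpa [hcdef, Pi.sub_def, Pi.add_def, Pi.neg_def] using (((Real.hasDerivAt_sin t).const_mul (x 0)).add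
            ((Real.hasDerivAt_cos t).const_mul (x 1))).congr_deriv (by ring)
        · simpa [hcdef] using hasDerivAt_const t (x 2))
      (fun t => by
        have h := dot_e3 f hcas (c t)
        rw [Fin.sum_univ_three]
        simp only [hcdef, Matrix.cons_val_zero, Matrix.cons_val_one, Matrix.head_cons,
          Matrix.cons_val_two, Matrix.tail_cons] at h ⊢
        linarith)
      t1 0
    have hc0 : c 0 = x := by
      ext i; fin_cases i <;> simp [hcdef]
    have hct1 : c t1 = ![r, 0, x 2] := by
      ext i; fin_cases i <;> simp [hcdef, hct, hst]
    rw [hc0, hct1] at key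
    exact key.symm
  -- Step 2: rotate about the y-axis to reach ![R, 0, 0]
  have step2 : f ![r, 0, x 2] = f ![R, 0, 0] := by
    rcases eq_or_lt_of_le hR0 with h0 | hRpos
    · have hx0 : x 0 = 0 := by nlinarith
      have hx1 : x 1 = 0 := by nlinarith
      have hx2 : x 2 = 0 := by nlinarith
      have hr : r = 0 := by rw [hrdef, hx0, hx1]; simp
      rw [hr, hx2, ← h0]
    · obtain ⟨t2, hc2, hs2⟩ := exists_cos_sin (a := r / R) (b := x 2 / R)
        (by field_simp; nlinarith)
      set c : ℝ → Fin 3 → ℝ := fun t =>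
        ![r * Real.cos t + x 2 * Real.sin t, 0, -(r * Real.sin t) + x 2 * Real.cos t]
        with hcdef
      have key := const_along f hf c
        (fun t => ![-(r * Real.sin t) + x 2 * Real.cos t, 0,
          -(r * Real.cos t + x 2 * Real.sin t)])
        (fun t => by
          rw [hasDerivAt_pi]
          intro i
          fin_cases i
          · simpa [hcdef, Pi.sub_def, Pi.add_def, Pi.neg_def] using (((Real.hasDerivAt_cos t).const_mul r).add
              ((Real.hasDerivAt_sin t).const_mul (x 2))).congr_deriv (by ring)
          · simpa [hcdef] using hasDerivAt_const t (0:ℝ)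
          · simpa [hcdef, Pi.sub_def, Pi.add_def, Pi.neg_def] using ((((Real.hasDerivAt_sin t).const_mul r).neg).add
              ((Real.hasDerivAt_cos t).const_mul (x 2))).congr_deriv (by ring))
        (fun t => by
          have h := dot_e2 f hcas (c t)
          rw [Fin.sum_univ_three]
          simp only [hcdef, Matrix.cons_val_zero, Matrix.cons_val_one, Matrix.head_cons,
            Matrix.cons_val_two, Matrix.tail_cons] at h ⊢
          linarith)
        t2 0
      have hc0 : c 0 = ![r, 0, x 2] := by
        ext i; fin_cases i <;> simp [hcdef]
      have hRne : R ≠ 0 := ne_of_gt hRpos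
      have e0 : r * Real.cos t2 + x 2 * Real.sin t2 = R := by
        rw [hc2, hs2]
        field_simp
        nlinarith
      have e2 : -(r * Real.sin t2) + x 2 * Real.cos t2 = 0 := by
        rw [hc2, hs2]
        field_simp
        ring
      have hct2 : c t2 = ![R, 0, 0] := by
        ext i; fin_cases i <;> simp [hcdef, e0, e2]
      rw [hc0, hct2] at key
      exact key.symm
  rw [step1, step2]

/-- If `f : ℝ³ → ℝ` is continuously differentiable and `Π × ∇f(Π) = 0` for
every `Π` (i.e. `f` is a Casimir of the rigid-body Lie–Poisson bracket), then `f` is constant on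
every sphere centred at the origin: `‖x‖ = ‖y‖` (Euclidean norm) implies `f x = f y`. -/
theorem casimir_constant_on_spheres
    (f : (Fin 3 → ℝ) → ℝ) (hf : ContDiff ℝ 1 f)
    (hcas : ∀ P : Fin 3 → ℝ, P ⨯₃ grad f P = 0) :
    ∀ x y : Fin 3 → ℝ,
      Real.sqrt (∑ i, x i ^ 2) = Real.sqrt (∑ i, y i ^ 2) → f x = f y := by
  intro x y hxy
  rw [to_axis f hf hcas x, to_axis f hf hcas y, hxy]
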